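/- Let Σ and Σ' be two symmetric positive semidefinite n×n real matrices with eigenvalues λ_1 ≤ ... ≤ λ_n and λ'_1 ≤ ... ≤ λ'_n respectively (both listed in increasing order). Then Σ_{i=1}^n (λ_i - λ'_i)² ≤ ‖Σ - Σ'‖_F², where ‖·‖_F denotes the Frobenius norm. -/

import Mathlib

open Finset Polynomial

open Matrix

lemma HW_aux_charmatrix_diag {n : ℕ} (d : Fin n → ℝ) :
    charmatrix (diagonal d) = diagonal (fun i => X - C (d i)) := by
  ext i j
  by_cases h : i = j
  · subst h; simp [charmatrix_apply_eq]
  · simp [charmatrix_apply_ne _ _ _ h, diagonal_apply_ne _ h]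

lemma HW_aux_charpoly_conj {n : ℕ} (U D : Matrix (Fin n) (Fin n) ℝ)
    (h1 : U * star U = 1) (h2 : star U * U = 1) :
    (U * D * star U).charpoly = D.charpoly := by
  let P := U.map (C : ℝ →+* ℝ[X])
  let P' := (star U).map (C : ℝ →+* ℝ[X])
  have hPP' : P * P' = 1 := by
    have := congrArg (Matrix.map · (C : ℝ →+* ℝ[X])) h1
    simpa [Matrix.map_mul] using this
  have hP'P : P' * P = 1 := by
    have := congrArg (Matrix.map · (C : ℝ →+* ℝ[X])) h2
    simpa [Matrix.map_mul] using this
  have hc : charmatrix (U * D * star U) = P * charmatrix D * P' := by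
    unfold charmatrix
    rw [Matrix.mul_sub, Matrix.sub_mul]
    congr 1
    · calc Matrix.scalar (Fin n) X = Matrix.scalar (Fin n) X * (P * P') := by rw [hPP', mul_one]
        _ = P * Matrix.scalar (Fin n) X * P' := by
            rw [← mul_assoc, (Matrix.scalar_commute X (fun r => (Commute.all _ _)) P).eq]
    · simp [Matrix.map_mul, mul_assoc, P, P']
  rw [Matrix.charpoly, Matrix.charpoly, hc, det_mul, det_mul]
  have : P.det * P'.det = 1 := by rw [← det_mul, hPP', det_one]
  calc P.det * D.charmatrix.det * P'.det = (P.det * P'.det) * D.charmatrix.det := by ring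
    _ = D.charmatrix.det := by rw [this, one_mul]

lemma HW_aux_charpoly_herm {n : ℕ} (A : Matrix (Fin n) (Fin n) ℝ) (hA : A.IsHermitian) :
    A.charpoly = ∏ i : Fin n, (X - C (hA.eigenvalues i)) := by
  have hspec := hA.spectral_theorem
  have hU1 : (hA.eigenvectorUnitary : Matrix (Fin n) (Fin n) ℝ) * star (hA.eigenvectorUnitary : Matrix (Fin n) (Fin n) ℝ) = 1 :=
    (Matrix.mem_unitaryGroup_iff).mp hA.eigenvectorUnitary.2
  have hU2 : star (hA.eigenvectorUnitary : Matrix (Fin n) (Fin n) ℝ) * (hA.eigenvectorUnitary : Matrix (Fin n) (Fin n) ℝ) = 1 :=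
    (Matrix.mem_unitaryGroup_iff').mp hA.eigenvectorUnitary.2
  have hdiag : (RCLike.ofReal ∘ hA.eigenvalues : Fin n → ℝ) = hA.eigenvalues := by
    ext i; simp
  rw [hdiag] at hspec
  conv_lhs => rw [hspec]
  rw [Unitary.conjStarAlgAut_apply]
  rw [HW_aux_charpoly_conj _ _ hU1 hU2, Matrix.charpoly, HW_aux_charmatrix_diag, det_diagonal]

lemma HW_aux_monotone_eq_sort {n : ℕ} (μ α : Fin n → ℝ) (hμ : Monotone μ)
    (h : ∏ i : Fin n, (X - C (μ i)) = ∏ i : Fin n, (X - C (α i))) :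
    μ = α ∘ Tuple.sort α := by
  have hm : (Finset.univ.val.map μ) = (Finset.univ.val.map α) := by
    have h1 : ∀ f : Fin n → ℝ, ∏ i : Fin n, (X - C (f i))
        = ((Finset.univ.val.map f).map (fun a : ℝ => X - C a)).prod := by
      intro f; rw [Multiset.map_map]; rfl
    have := congrArg Polynomial.roots h
    rwa [h1 μ, h1 α, Polynomial.roots_multiset_prod_X_sub_C,
      Polynomial.roots_multiset_prod_X_sub_C] at this
  rw [Fin.univ_val_map, Fin.univ_val_map, Multiset.coe_eq_coe] at hm
  have hperm : List.Perm (List.ofFn μ) (List.ofFn (α ∘ Tuple.sort α)) :=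
    hm.trans (Equiv.Perm.ofFn_comp_perm (Tuple.sort α) α).symm
  exact List.ofFn_injective <| List.Perm.eq_of_sortedLE
    (List.sortedLE_ofFn_iff.mpr hμ) (List.sortedLE_ofFn_iff.mpr (Tuple.monotone_sort α)) hperm

lemma HW_aux_ds_bound {n : ℕ} (μ ν : Fin n → ℝ) (hμ : Monotone μ) (hν : Monotone ν)
    (S : Matrix (Fin n) (Fin n) ℝ) (hS : S ∈ doublyStochastic ℝ (Fin n)) :
    ∑ i : Fin n, ∑ j : Fin n, S i j * (μ i * ν j) ≤ ∑ i : Fin n, μ i * ν i := by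
  have hlin : IsLinearMap ℝ (fun M : Matrix (Fin n) (Fin n) ℝ =>
      ∑ i : Fin n, ∑ j : Fin n, M i j * (μ i * ν j)) := by
    constructor
    · intro M N; simp [add_mul, Finset.sum_add_distrib]
    · intro c M; simp [Matrix.smul_apply, smul_eq_mul, mul_assoc, Finset.mul_sum]
  have hconv : Convex ℝ {M : Matrix (Fin n) (Fin n) ℝ |
      ∑ i : Fin n, ∑ j : Fin n, M i j * (μ i * ν j) ≤ ∑ i : Fin n, μ i * ν i} :=
    convex_halfSpace_le hlin _
  have hsub : {M | ∃ σ : Equiv.Perm (Fin n), σ.permMatrix ℝ = M} ⊆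
      {M : Matrix (Fin n) (Fin n) ℝ |
      ∑ i : Fin n, ∑ j : Fin n, M i j * (μ i * ν j) ≤ ∑ i : Fin n, μ i * ν i} := by
    rintro M ⟨σ, rfl⟩
    have hentry : ∀ i j, (σ.permMatrix ℝ) i j = if σ i = j then 1 else 0 := by
      intro i j
      simp [Equiv.Perm.permMatrix, PEquiv.toMatrix_apply, Equiv.toPEquiv, Option.mem_def]
    simp only [Set.mem_setOf_eq]
    calc ∑ i : Fin n, ∑ j : Fin n, (σ.permMatrix ℝ) i j * (μ i * ν j)
        = ∑ i : Fin n, μ i * ν (σ i) := by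
          refine Finset.sum_congr rfl fun i _ => ?_
          rw [Finset.sum_eq_single (σ i)]
          · rw [hentry]; simp
          · intro j _ hj; rw [hentry, if_neg (Ne.symm hj), zero_mul]
          · simp
      _ = ∑ i : Fin n, ν (σ i) * μ i := by simp [mul_comm]
      _ ≤ ∑ i : Fin n, ν i * μ i := (hν.monovary hμ).sum_comp_perm_mul_le_sum_mul
      _ = ∑ i : Fin n, μ i * ν i := by simp [mul_comm]
  have heq := doublyStochastic_eq_convexHull_permMatrix (R := ℝ) (n := Fin n)
  have hS' : S ∈ convexHull ℝ {M | ∃ σ : Equiv.Perm (Fin n), σ.permMatrix ℝ = M} := by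
    rw [← heq]; exact hS
  exact convexHull_min hsub hconv hS'

lemma HW_aux_herm_spectral {n : ℕ} (A : Matrix (Fin n) (Fin n) ℝ) (hA : A.IsHermitian) :
    A = (hA.eigenvectorUnitary : Matrix (Fin n) (Fin n) ℝ) * diagonal hA.eigenvalues
      * star (hA.eigenvectorUnitary : Matrix (Fin n) (Fin n) ℝ) := by
  have h := hA.spectral_theorem
  have hdiag : (RCLike.ofReal ∘ hA.eigenvalues : Fin n → ℝ) = hA.eigenvalues := by ext i; simp
  rwa [hdiag] at h

lemma HW_aux_trace_sq {n : ℕ} (A : Matrix (Fin n) (Fin n) ℝ) (hA : A.IsHermitian) :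
    (A * A).trace = ∑ i : Fin n, hA.eigenvalues i ^ 2 := by
  set U := (hA.eigenvectorUnitary : Matrix (Fin n) (Fin n) ℝ) with hUdef
  have hU2 : star U * U = 1 := (Matrix.mem_unitaryGroup_iff').mp hA.eigenvectorUnitary.2
  have h := HW_aux_herm_spectral A hA
  calc (A * A).trace
      = (U * diagonal hA.eigenvalues * star U * (U * diagonal hA.eigenvalues * star U)).trace := by
        rw [← h]
    _ = (U * (diagonal hA.eigenvalues * diagonal hA.eigenvalues) * star U).trace := by
        rw [show U * diagonal hA.eigenvalues * star U * (U * diagonal hA.eigenvalues * star U)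
          = U * (diagonal hA.eigenvalues * (star U * U) * diagonal hA.eigenvalues) * star U by
            simp only [Matrix.mul_assoc], hU2]
        simp [Matrix.mul_assoc]
    _ = ∑ i : Fin n, hA.eigenvalues i ^ 2 := by
        rw [Matrix.trace_mul_cycle, hU2, Matrix.one_mul, Matrix.diagonal_mul_diagonal,
          Matrix.trace_diagonal]
        simp [sq]

lemma HW_aux_trace_mul_eq {n : ℕ} (A B : Matrix (Fin n) (Fin n) ℝ)
    (hA : A.IsHermitian) (hB : B.IsHermitian) :
    ∃ S ∈ doublyStochastic ℝ (Fin n),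
      (A * B).trace = ∑ i : Fin n, ∑ j : Fin n,
        S i j * (hA.eigenvalues i * hB.eigenvalues j) := by
  set U := (hA.eigenvectorUnitary : Matrix (Fin n) (Fin n) ℝ) with hUdef
  set V := (hB.eigenvectorUnitary : Matrix (Fin n) (Fin n) ℝ) with hVdef
  have hU1 : U * star U = 1 := (Matrix.mem_unitaryGroup_iff).mp hA.eigenvectorUnitary.2
  have hU2 : star U * U = 1 := (Matrix.mem_unitaryGroup_iff').mp hA.eigenvectorUnitary.2
  have hV1 : V * star V = 1 := (Matrix.mem_unitaryGroup_iff).mp hB.eigenvectorUnitary.2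
  have hV2 : star V * V = 1 := (Matrix.mem_unitaryGroup_iff').mp hB.eigenvectorUnitary.2
  set W : Matrix (Fin n) (Fin n) ℝ := star U * V with hWdef
  have hW1 : W * star W = 1 := by
    rw [hWdef, StarMul.star_mul, star_star, Matrix.mul_assoc, ← Matrix.mul_assoc V, hV1,
      Matrix.one_mul, hU2]
  have hW2 : star W * W = 1 := by
    rw [hWdef, StarMul.star_mul, star_star, Matrix.mul_assoc, ← Matrix.mul_assoc U, hU1,
      Matrix.one_mul, hV2]
  have hWentry : ∀ i j, (star W) i j = W j i := by
    intro i j; rw [Matrix.star_eq_conjTranspose, Matrix.conjTranspose_apply]; simp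
  refine ⟨fun i j => (W i j) ^ 2, ?_, ?_⟩
  · refine mem_doublyStochastic_iff_sum.2 ?_
    refine ⟨fun i j => sq_nonneg _, fun i => ?_, fun j => ?_⟩
    · have := congrFun (congrFun hW1 i) i
      rw [Matrix.mul_apply] at this
      simpa [hWentry, sq] using this
    · have := congrFun (congrFun hW2 j) j
      rw [Matrix.mul_apply] at this
      simpa [hWentry, sq, Matrix.one_apply] using this
  · have hAB : A * B = U * (diagonal hA.eigenvalues * W * diagonal hB.eigenvalues) * (star V) := by
      conv_lhs => rw [HW_aux_herm_spectral A hA, HW_aux_herm_spectral B hB]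
      simp only [← hUdef, ← hVdef, hWdef, Matrix.mul_assoc]
    have hsVU : star V * U = star W := by rw [hWdef, StarMul.star_mul, star_star]
    rw [hAB, Matrix.trace_mul_cycle, hsVU]
    -- goal : (star W * (diagonal α * W * diagonal β)).trace = ...
    rw [Matrix.trace]
    have hentry : ∀ i, (star W * (diagonal hA.eigenvalues * W * diagonal hB.eigenvalues)).diag i
        = ∑ j : Fin n, W j i * (hA.eigenvalues j * W j i * hB.eigenvalues i) := by
      intro i
      rw [Matrix.diag_apply, Matrix.mul_apply]
      refine Finset.sum_congr rfl fun j _ => ?_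
      rw [hWentry, Matrix.mul_diagonal, Matrix.diagonal_mul]
    rw [Finset.sum_congr rfl fun i _ => hentry i, Finset.sum_comm]
    refine Finset.sum_congr rfl fun i _ => Finset.sum_congr rfl fun j _ => ?_
    ring

/-- Hoffman–Wielandt inequality for symmetric PSD matrices:
if `A` and `B` are real symmetric positive semidefinite `n×n` matrices whose
eigenvalues (with multiplicity), listed in increasing order, are `μ₁ ≤ … ≤ μ_n`
and `ν₁ ≤ … ≤ ν_n`, then `∑ᵢ (μᵢ - νᵢ)² ≤ ‖A - B‖_F²`. -/
theorem hoffman_wielandt_psd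
    (n : ℕ) (A B : Matrix (Fin n) (Fin n) ℝ)
    (hA : A.PosSemidef) (hB : B.PosSemidef)
    (μ ν : Fin n → ℝ) (hμ : Monotone μ) (hν : Monotone ν)
    (hAeig : A.charpoly = ∏ i : Fin n, (X - C (μ i)))
    (hBeig : B.charpoly = ∏ i : Fin n, (X - C (ν i))) :
    ∑ i : Fin n, (μ i - ν i) ^ 2 ≤ ∑ i : Fin n, ∑ j : Fin n, (A i j - B i j) ^ 2 := by
  classical
  have hAH : A.IsHermitian := hA.1
  have hBH : B.IsHermitian := hB.1
  set α := hAH.eigenvalues with hαdef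
  set β := hBH.eigenvalues with hβdef
  have hμα : μ = α ∘ Tuple.sort α :=
    HW_aux_monotone_eq_sort μ α hμ (hAeig.symm.trans (HW_aux_charpoly_herm A hAH))
  have hνβ : ν = β ∘ Tuple.sort β :=
    HW_aux_monotone_eq_sort ν β hν (hBeig.symm.trans (HW_aux_charpoly_herm B hBH))
  set p := Tuple.sort α with hpdef
  set q := Tuple.sort β with hqdef
  have e1 : ∀ i, α (p i) = μ i := fun i => (congrFun hμα i).symm
  have e2 : ∀ j, β (q j) = ν j := fun j => (congrFun hνβ j).symm
  -- trace as double sum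
  have htr2 : ∀ M N : Matrix (Fin n) (Fin n) ℝ,
      (M * N).trace = ∑ i : Fin n, ∑ j : Fin n, M i j * N j i := by
    intro M N; simp [Matrix.trace, Matrix.diag, Matrix.mul_apply]
  have ha : ∀ i j, A j i = A i j := fun i j => by
    have := hAH.apply i j; simpa using this
  have hb : ∀ i j, B j i = B i j := fun i j => by
    have := hBH.apply i j; simpa using this
  have E1 : ∑ i : Fin n, ∑ j : Fin n, (A i j - B i j) ^ 2
      = (A * A).trace + (B * B).trace - 2 * (A * B).trace := by
    rw [htr2, htr2, htr2, Finset.mul_sum, ← Finset.sum_add_distrib, ← Finset.sum_sub_distrib]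
    refine Finset.sum_congr rfl fun i _ => ?_
    rw [Finset.mul_sum, ← Finset.sum_add_distrib, ← Finset.sum_sub_distrib]
    refine Finset.sum_congr rfl fun j _ => ?_
    rw [ha, hb]
    ring
  have E2 : ∑ i : Fin n, (μ i - ν i) ^ 2
      = ∑ i : Fin n, μ i ^ 2 + ∑ i : Fin n, ν i ^ 2 - 2 * ∑ i : Fin n, μ i * ν i := by
    rw [Finset.mul_sum, ← Finset.sum_add_distrib, ← Finset.sum_sub_distrib]
    exact Finset.sum_congr rfl fun i _ => by ring
  have hsumA : ∑ i : Fin n, μ i ^ 2 = ∑ i : Fin n, α i ^ 2 := by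
    rw [hμα]
    exact Equiv.sum_comp p (fun i => α i ^ 2)
  have hsumB : ∑ i : Fin n, ν i ^ 2 = ∑ i : Fin n, β i ^ 2 := by
    rw [hνβ]
    exact Equiv.sum_comp q (fun i => β i ^ 2)
  have hkey : (A * B).trace ≤ ∑ i : Fin n, μ i * ν i := by
    obtain ⟨S, hSds, htr⟩ := HW_aux_trace_mul_eq A B hAH hBH
    have hS' : (fun i j => S (p i) (q j)) ∈ doublyStochastic ℝ (Fin n) := by
      rw [mem_doublyStochastic_iff_sum] at hSds
      refine mem_doublyStochastic_iff_sum.2 ?_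
      obtain ⟨h0, hrow, hcol⟩ := hSds
      refine ⟨fun i j => h0 _ _, fun i => ?_, fun j => ?_⟩
      · rw [Equiv.sum_comp q (fun j => S (p i) j)]; exact hrow _
      · rw [Equiv.sum_comp p (fun i => S i (q j))]; exact hcol _
    have heq : (A * B).trace
        = ∑ i : Fin n, ∑ j : Fin n, S (p i) (q j) * (μ i * ν j) := by
      rw [htr]
      calc ∑ i : Fin n, ∑ j : Fin n, S i j * (α i * β j)
          = ∑ i : Fin n, ∑ j : Fin n, S (p i) (q j) * (α (p i) * β (q j)) := by
            rw [← Equiv.sum_comp p (fun i => ∑ j : Fin n, S i j * (α i * β j))]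
            refine Finset.sum_congr rfl fun i _ => ?_
            rw [← Equiv.sum_comp q (fun j => S (p i) j * (α (p i) * β j))]
        _ = ∑ i : Fin n, ∑ j : Fin n, S (p i) (q j) * (μ i * ν j) := by
            simp only [e1, e2]
    rw [heq]
    exact HW_aux_ds_bound μ ν hμ hν _ hS'
  have hTA := HW_aux_trace_sq A hAH
  have hTB := HW_aux_trace_sq B hBH
  rw [E1, E2, ← hαdef] at *
  linarith [hkey, hsumA, hsumB]
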